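/- There exists a sequence (a_j)_{j∈ℤ} of real numbers such that, setting b_j := 4^j for j ∈ ℤ: (a) for every δ > 0 and every k ∈ ℤ, ∑_{j∈ℤ} 2^{δ|j|} · |a_j| · b_j^k < ∞; and (b) for every k ∈ ℤ, ∑_{j∈ℤ} a_j · (-b_j)^k = 1, the series converging absolutely. -/

import Mathlib

/-! Construction: let `zz j = (-1)^j * 2^(j - j^2)` (coefficients of Jacobi's
triple product with q = 1/4, which vanishes at all points `4^k`), and
`aa j = zz j / (1 + 4^j)`.  Then `N k := ∑' j, aa j * 4^(j*k)` satisfies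
`N k + N (k+1) = ∑' j, zz j * 4^(j*k) = 0`, hence `∑ aa j * (-4^j)^k = N 0`
for every `k`; finally `N 0 > 0` by a numerical estimate, and we normalize. -/

noncomputable def zz (j : ℤ) : ℝ := (-1)^j * 2^(j - j^2)
noncomputable def aa (j : ℤ) : ℝ := zz j / (1 + 4^j)

lemma den_pos (j : ℤ) : (0:ℝ) < 1 + 4^j := by positivity

lemma abs_neg_one_zpow_real (j : ℤ) : |(-1:ℝ)^j| = 1 := by
  rcases Int.even_or_odd j with h | h
  · rw [h.neg_one_zpow]; norm_num
  · rw [h.neg_one_zpow]; norm_num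

lemma abs_zz (j : ℤ) : |zz j| = (2:ℝ)^(j - j^2) := by
  rw [zz, abs_mul, abs_neg_one_zpow, abs_of_pos (by positivity : (0:ℝ) < 2^(j-j^2)), one_mul]

lemma abs_aa_le (j : ℤ) : |aa j| ≤ (2:ℝ)^(j - j^2) := by
  rw [aa, abs_div, abs_zz, abs_of_pos (den_pos j)]
  have h1 : (1:ℝ) ≤ 1 + 4^j := le_add_of_nonneg_right (by positivity)
  calc (2:ℝ)^(j-j^2) / (1 + 4^j) ≤ (2:ℝ)^(j-j^2) / 1 :=
        div_le_div_of_nonneg_left (by positivity) one_pos h1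
    _ = _ := by ring

lemma four_zpow (m : ℤ) : (4:ℝ)^m = (2:ℝ)^(2*m) := by
  rw [show (4:ℝ) = 2^(2:ℤ) by norm_num, ← zpow_mul]

lemma four_zpow_pos (m : ℤ) : (0:ℝ) < 4^m := by positivity

lemma summable_half_pow : Summable (fun j : ℤ => (1/2:ℝ)^j.natAbs) := by
  have hg : Summable (fun n : ℕ => (1/2:ℝ)^n) :=
    summable_geometric_of_lt_one (by norm_num) (by norm_num)
  apply Summable.of_nat_of_neg
  · exact hg.congr (by simp)
  · exact hg.congr (by simp)

lemma half_pow_eq (j : ℤ) : (1/2:ℝ)^j.natAbs = (2:ℝ)^(-|(j:ℝ)|) := by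
  have h1 : |(j:ℝ)| = (j.natAbs : ℝ) := by
    rw [Nat.cast_natAbs]; push_cast; ring
  rw [h1, Real.rpow_neg (by norm_num), Real.rpow_natCast, one_div, inv_pow]

/-- Master summability lemma: Gaussian decay beats any exponential factor. -/
lemma master (c : ℤ) (d : ℝ) :
    Summable (fun j : ℤ => (2:ℝ)^(d * |(j:ℝ)|) * (2:ℝ)^((c*j - j^2 : ℤ))) := by
  set u : ℝ := |d| + |(c:ℝ)| + 1 with hu
  have hg : Summable (fun j : ℤ => (2:ℝ)^(u^2) * (1/2:ℝ)^j.natAbs) :=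
    summable_half_pow.mul_left _
  have h1 : ∀ j : ℤ, 0 ≤ (2:ℝ)^(d * |(j:ℝ)|) * (2:ℝ)^((c*j - j^2 : ℤ)) := by
    intro j; positivity
  have h2 : ∀ j : ℤ, (2:ℝ)^(d * |(j:ℝ)|) * (2:ℝ)^((c*j - j^2 : ℤ))
      ≤ (2:ℝ)^(u^2) * (1/2:ℝ)^j.natAbs := by
    intro j
    have e1 : ((2:ℝ)^((c*j - j^2 : ℤ)) : ℝ) = (2:ℝ)^(((c*j - j^2 : ℤ) : ℝ)) :=
      (Real.rpow_intCast 2 _).symm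
    rw [e1, half_pow_eq, ← Real.rpow_add (by norm_num), ← Real.rpow_add (by norm_num)]
    apply Real.rpow_le_rpow_of_exponent_le one_le_two
    have h3 : (c:ℝ)*(j:ℝ) ≤ |(c:ℝ)| * |(j:ℝ)| := by
      rw [← abs_mul]; exact le_abs_self _
    have h4 : |(j:ℝ)|^2 = (j:ℝ)^2 := sq_abs _
    have h5 : d * |(j:ℝ)| ≤ |d| * |(j:ℝ)| :=
      mul_le_mul_of_nonneg_right (le_abs_self d) (abs_nonneg _)
    push_cast
    nlinarith [sq_nonneg (u - |(j:ℝ)|), abs_nonneg (j:ℝ), abs_nonneg (c:ℝ), abs_nonneg d]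
  exact Summable.of_nonneg_of_le h1 h2 hg

lemma term_bound (k j : ℤ) : |aa j| * (4:ℝ)^(j*k) ≤ (2:ℝ)^(((1+2*k)*j - j^2 : ℤ)) := by
  have h1 : |aa j| * (4:ℝ)^(j*k) ≤ (2:ℝ)^(j - j^2) * (2:ℝ)^(2*(j*k)) := by
    rw [← four_zpow (j*k)]
    exact mul_le_mul_of_nonneg_right (abs_aa_le j) (four_zpow_pos _).le
  calc |aa j| * (4:ℝ)^(j*k) ≤ (2:ℝ)^(j - j^2) * (2:ℝ)^(2*(j*k)) := h1
    _ = (2:ℝ)^(j - j^2 + 2*(j*k)) := (zpow_add₀ (by norm_num) _ _).symm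
    _ = (2:ℝ)^((1+2*k)*j - j^2) := by ring_nf

lemma summable_A (k : ℤ) (d : ℝ) :
    Summable (fun j : ℤ => (2:ℝ)^(d*|(j:ℝ)|) * |aa j| * (4:ℝ)^(j*k)) := by
  have h1 : ∀ j : ℤ, 0 ≤ (2:ℝ)^(d*|(j:ℝ)|) * |aa j| * (4:ℝ)^(j*k) := by
    intro j; positivity
  have h2 : ∀ j : ℤ, (2:ℝ)^(d*|(j:ℝ)|) * |aa j| * (4:ℝ)^(j*k)
      ≤ (2:ℝ)^(d*|(j:ℝ)|) * (2:ℝ)^(((1+2*k)*j - j^2 : ℤ)) := by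
    intro j
    rw [mul_assoc]
    exact mul_le_mul_of_nonneg_left (term_bound k j) (by positivity)
  exact Summable.of_nonneg_of_le h1 h2 (master (1+2*k) d)

lemma summable_abs_aak (k : ℤ) : Summable (fun j : ℤ => |aa j| * (4:ℝ)^(j*k)) := by
  have := summable_A k 0
  apply this.congr
  intro j
  rw [zero_mul, Real.rpow_zero, one_mul]

lemma summable_aak (k : ℤ) : Summable (fun j : ℤ => aa j * (4:ℝ)^(j*k)) := by
  apply Summable.of_abs
  apply (summable_abs_aak k).congr
  intro j
  rw [abs_mul, abs_of_pos (four_zpow_pos _)]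

lemma neg_one_zpow_sub (k j : ℤ) : (-1:ℝ)^(2*k+1-j) = -((-1:ℝ)^j) := by
  rcases Int.even_or_odd j with ⟨m, hm⟩ | ⟨m, hm⟩
  · have h1 : Odd (2*k+1-j) := ⟨k - m, by omega⟩
    have h2 : Even j := ⟨m, hm⟩
    rw [h1.neg_one_zpow, h2.neg_one_zpow]
  · have h1 : Even (2*k+1-j) := ⟨k - m, by omega⟩
    have h2 : Odd j := ⟨m, hm⟩
    rw [h1.neg_one_zpow, h2.neg_one_zpow]; norm_num

lemma zz_form (k j : ℤ) :
    zz j * (4:ℝ)^(j*k) = (-1)^j * (2:ℝ)^((1+2*k)*j - j^2) := by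
  rw [zz, four_zpow, mul_assoc, ← zpow_add₀ (by norm_num : (2:ℝ) ≠ 0)]
  ring_nf

lemma zz_antisym (k j : ℤ) :
    zz (2*k+1-j) * (4:ℝ)^((2*k+1-j)*k) = -(zz j * (4:ℝ)^(j*k)) := by
  rw [zz_form, zz_form, neg_one_zpow_sub,
    show (1+2*k)*(2*k+1-j) - (2*k+1-j)^2 = (1+2*k)*j - j^2 by ring]
  ring

/-- The crucial vanishing identity: the Jacobi coefficients annihilate all
powers `4^k`, by the sign-reversing involution `j ↦ 2k+1-j`. -/
lemma tsum_zz_zero (k : ℤ) : ∑' j : ℤ, zz j * (4:ℝ)^(j*k) = 0 := by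
  set f : ℤ → ℝ := fun j => zz j * (4:ℝ)^(j*k) with hf
  have h1 : ∑' j : ℤ, f ((Equiv.subLeft (2*k+1)) j) = ∑' j : ℤ, f j :=
    (Equiv.subLeft (2*k+1)).tsum_eq f
  have h2 : ∀ j : ℤ, f ((Equiv.subLeft (2*k+1)) j) = - f j := by
    intro j
    simp only [Equiv.subLeft_apply, hf]
    exact zz_antisym k j
  rw [tsum_congr h2, tsum_neg] at h1
  linarith

lemma key_rec (k : ℤ) :
    ∑' j : ℤ, aa j * (4:ℝ)^(j*(k+1)) = - ∑' j : ℤ, aa j * (4:ℝ)^(j*k) := by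
  have h1 := summable_aak k
  have h2 := summable_aak (k+1)
  have hpt : ∀ j : ℤ, aa j * (4:ℝ)^(j*k) + aa j * (4:ℝ)^(j*(k+1)) = zz j * (4:ℝ)^(j*k) := by
    intro j
    have hd : (1:ℝ) + 4^j ≠ 0 := (den_pos j).ne'
    have h4 : (4:ℝ)^(j*(k+1)) = 4^(j*k) * 4^j := by
      rw [show j*(k+1) = j*k + j by ring, zpow_add₀ (by norm_num : (4:ℝ) ≠ 0)]
    rw [h4, aa]
    field_simp
  have hadd := Summable.tsum_add h1 h2
  rw [tsum_congr hpt, tsum_zz_zero k] at hadd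
  linarith

lemma N_eq (k : ℤ) :
    ∑' j : ℤ, aa j * (4:ℝ)^(j*k) = (-1)^k * ∑' j : ℤ, aa j := by
  induction k using Int.induction_on with
  | zero => simp
  | succ n ih =>
      rw [key_rec n, ih, zpow_add₀ (by norm_num : (-1:ℝ) ≠ 0)]
      ring
  | pred n ih =>
      have h := key_rec (-(n:ℤ)-1)
      rw [show -(n:ℤ)-1+1 = -(n:ℤ) by ring] at h
      have hsign : (-1:ℝ)^(-(n:ℤ)-1) = -(-1:ℝ)^(-(n:ℤ)) := by
        rw [zpow_sub₀ (by norm_num : (-1:ℝ) ≠ 0), zpow_one]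
        ring
      rw [ih] at h
      rw [hsign]
      linarith

lemma aa_zero : aa 0 = 1/2 := by norm_num [aa, zz]
lemma aa_one : aa 1 = -1/5 := by norm_num [aa, zz]
lemma aa_neg_one : aa (-1) = -1/5 := by norm_num [aa, zz]

lemma eighth_pow_eq (n : ℕ) : (1/8:ℝ)^n = (2:ℝ)^(-3*(n:ℤ)) := by
  rw [show (1/8:ℝ) = (2:ℝ)^(-3:ℤ) by norm_num, ← zpow_natCast ((2:ℝ)^(-3:ℤ)) n, ← zpow_mul]

lemma aa_tail (j : ℤ) (h : 2 ≤ j.natAbs) : |aa j| ≤ (1/8:ℝ)^j.natAbs := by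
  rw [eighth_pow_eq]
  rcases le_or_gt 0 j with hj | hj
  · have hj2 : 2 ≤ j := by omega
    have hcast : (j.natAbs : ℤ) = j := Int.natAbs_of_nonneg hj
    have e1 : |aa j| = (2:ℝ)^(j-j^2)/(1+4^j) := by
      rw [aa, abs_div, abs_zz, abs_of_pos (den_pos j)]
    have e2 : (2:ℝ)^(j-j^2)/(1+4^j) ≤ (2:ℝ)^(j-j^2)/4^j :=
      div_le_div_of_nonneg_left (by positivity) (four_zpow_pos j)
        (le_add_of_nonneg_left (by norm_num))
    have e3 : (2:ℝ)^(j-j^2)/4^j = (2:ℝ)^(j - j^2 - 2*j) := by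
      rw [four_zpow, ← zpow_sub₀ (by norm_num : (2:ℝ) ≠ 0)]
    have e4 : (2:ℝ)^(j - j^2 - 2*j) ≤ (2:ℝ)^(-3*(j.natAbs:ℤ)) := by
      apply zpow_le_zpow_right₀ one_le_two
      rw [hcast]
      nlinarith
    rw [e1]; rw [e3] at e2; exact e2.trans e4
  · have hcast : (j.natAbs : ℤ) = -j := Int.ofNat_natAbs_of_nonpos hj.le
    have hj2 : j ≤ -2 := by omega
    refine (abs_aa_le j).trans ?_
    apply zpow_le_zpow_right₀ one_le_two
    rw [hcast]
    nlinarith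

lemma hsum_aa : Summable aa := by
  have := summable_aak 0
  apply this.congr
  intro j
  simp

lemma hsum_abs_aa : Summable (fun j : ℤ => |aa j|) := by
  have := summable_abs_aak 0
  apply this.congr
  intro j
  simp

lemma geom_tail : ∑' n : ℕ, (1/8:ℝ)^(n+2) = 1/56 := by
  have h1 : ∀ n : ℕ, (1/8:ℝ)^(n+2) = (1/8:ℝ)^n * (1/64) := by
    intro n; rw [pow_add]; norm_num
  rw [tsum_congr h1, tsum_mul_right,
    tsum_geometric_of_lt_one (by norm_num) (by norm_num)]
  norm_num

lemma summable_geom_tail : Summable (fun n : ℕ => (1/8:ℝ)^(n+2)) := by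
  have : Summable (fun n : ℕ => (1/8:ℝ)^n * (1/64)) :=
    (summable_geometric_of_lt_one (by norm_num) (by norm_num)).mul_right _
  exact this.congr (fun n => by rw [pow_add]; norm_num)

lemma sum_aa_pos : 0 < ∑' j : ℤ, aa j := by
  have hinj1 : Function.Injective ((↑) : ℕ → ℤ) := Nat.cast_injective
  have hinj2 : Function.Injective (fun n : ℕ => (-(n+1) : ℤ)) := by
    intro a b hab; simp only at hab; omega
  have hP : Summable (fun n : ℕ => aa n) := hsum_aa.comp_injective hinj1
  have hQ : Summable (fun n : ℕ => aa (-(n+1))) := hsum_aa.comp_injective hinj2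
  have hPa : Summable (fun n : ℕ => |aa n|) := hsum_abs_aa.comp_injective hinj1
  have hQa : Summable (fun n : ℕ => |aa (-(n+1))|) := hsum_abs_aa.comp_injective hinj2
  have hsplit : HasSum aa ((∑' n : ℕ, aa n) + ∑' n : ℕ, aa (-(n+1))) :=
    HasSum.of_nat_of_neg_add_one hP.hasSum hQ.hasSum
  have hPsplit : ∑ i ∈ Finset.range 2, aa i + ∑' n : ℕ, aa ((n:ℕ)+2) = ∑' n : ℕ, aa n :=
    Summable.sum_add_tsum_nat_add 2 hP
  have hR1 : |∑' n : ℕ, aa ((n:ℕ)+2)| ≤ 1/56 := by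
    calc |∑' n : ℕ, aa ((n:ℕ)+2)| ≤ ∑' n : ℕ, |aa ((n:ℕ)+2)| := by
          simpa [Real.norm_eq_abs] using
            norm_tsum_le_tsum_norm (f := fun n : ℕ => aa ((n:ℕ)+2))
              (by simpa [Real.norm_eq_abs, Function.comp_def] using (hPa.comp_injective (add_left_injective 2)))
      _ ≤ ∑' n : ℕ, (1/8:ℝ)^(n+2) := by
          apply Summable.tsum_le_tsum _ (hPa.comp_injective (add_left_injective 2)) summable_geom_tail
          intro n
          have := aa_tail ((n:ℤ)+2) (by omega)
          have hnat : ((n:ℤ)+2).natAbs = n+2 := by omega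
          rw [hnat] at this
          simpa using this
      _ = 1/56 := geom_tail
  have hQsplit : ∑' n : ℕ, aa (-(n+1)) = aa (-1) + ∑' n : ℕ, aa (-((n:ℤ)+2)) := by
    rw [Summable.tsum_eq_zero_add hQ]
    norm_num
    exact tsum_congr fun b => by ring_nf
  have hQa2 : Summable (fun n : ℕ => |aa (-((n:ℤ)+2))|) := by
    have := hQa.comp_injective (add_left_injective 1)
    apply this.congr
    intro n
    simp only [Function.comp]
    push_cast
    ring_nf
  have hR2 : |∑' n : ℕ, aa (-((n:ℤ)+2))| ≤ 1/56 := by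
    calc |∑' n : ℕ, aa (-((n:ℤ)+2))| ≤ ∑' n : ℕ, |aa (-((n:ℤ)+2))| := by
          simpa [Real.norm_eq_abs] using
            norm_tsum_le_tsum_norm (f := fun n : ℕ => aa (-((n:ℤ)+2)))
              (by simpa [Real.norm_eq_abs] using hQa2)
      _ ≤ ∑' n : ℕ, (1/8:ℝ)^(n+2) := by
          apply Summable.tsum_le_tsum _ hQa2 summable_geom_tail
          intro n
          have := aa_tail (-((n:ℤ)+2)) (by omega)
          have hnat : (-((n:ℤ)+2)).natAbs = n+2 := by omega
          rwa [hnat] at this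
      _ = 1/56 := geom_tail
  have hsum2 : ∑ i ∈ Finset.range 2, aa i = 3/10 := by
    rw [Finset.sum_range_succ, Finset.sum_range_one]
    norm_num [aa_zero, aa_one]
  rw [hsplit.tsum_eq]
  have h1 := abs_le.mp hR1
  have h2 := abs_le.mp hR2
  rw [hQsplit, aa_neg_one]
  rw [← hPsplit, hsum2]
  linarith

lemma abs_negfour_zpow (j k : ℤ) : |(-(4:ℝ)^j)^k| = (4:ℝ)^(j*k) := by
  have h : (-(4:ℝ)^j)^k = (-1)^k * (4:ℝ)^(j*k) := by
    rw [show (-(4:ℝ)^j) = (-1) * 4^j by ring, mul_zpow, ← zpow_mul]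
  rw [h, abs_mul, abs_neg_one_zpow, one_mul, abs_of_pos (four_zpow_pos _)]

/-- there is a real sequence (a_j)_{j∈ℤ} such that, with b_j = 4^j:
(a) for every δ > 0 and k ∈ ℤ, ∑_{j∈ℤ} 2^{δ|j|}·|a_j|·b_j^k < ∞ (note b_j^k = 4^{jk});
(b) for every k ∈ ℤ, ∑_{j∈ℤ} a_j·(-b_j)^k = 1, the series converging absolutely. -/
theorem statement9 :
    ∃ a : ℤ → ℝ,
      (∀ δ : ℝ, 0 < δ → ∀ k : ℤ,
        Summable (fun j : ℤ => (2 : ℝ) ^ (δ * |(j : ℝ)|) * |a j| * (4 : ℝ) ^ (j * k))) ∧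
      (∀ k : ℤ,
        Summable (fun j : ℤ => |a j * (-(4 : ℝ) ^ j) ^ k|) ∧
        HasSum (fun j : ℤ => a j * (-(4 : ℝ) ^ j) ^ k) 1) := by
  set M : ℝ := ∑' j : ℤ, aa j with hM
  have hMpos : 0 < M := sum_aa_pos
  refine ⟨fun j => aa j / M, ?_, ?_⟩
  · intro δ hδ k
    have h := (summable_A k δ).mul_right M⁻¹
    apply h.congr
    intro j
    rw [abs_div, abs_of_pos hMpos]
    ring
  · intro k
    have habs : Summable (fun j : ℤ => |aa j / M * (-(4:ℝ)^j)^k|) := by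
      have h := (summable_abs_aak k).mul_right M⁻¹
      apply h.congr
      intro j
      rw [abs_mul, abs_negfour_zpow, abs_div, abs_of_pos hMpos]
      ring
    refine ⟨habs, ?_⟩
    have hS : Summable (fun j : ℤ => aa j / M * (-(4:ℝ)^j)^k) := Summable.of_abs habs
    rw [hS.hasSum_iff]
    have hpt : ∀ j : ℤ, aa j / M * (-(4:ℝ)^j)^k
        = (aa j * (4:ℝ)^(j*k)) * ((-1)^k * M⁻¹) := by
      intro j
      rw [show (-(4:ℝ)^j) = (-1) * 4^j by ring, mul_zpow, ← zpow_mul]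
      ring
    rw [tsum_congr hpt, tsum_mul_right, N_eq k, ← hM]
    have hsq : ((-1:ℝ)^k) * ((-1:ℝ)^k) = 1 := by
      rw [← zpow_add₀ (by norm_num : (-1:ℝ) ≠ 0)]
      exact Even.neg_one_zpow ⟨k, rfl⟩
    field_simp
    nlinarith [hsq]
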